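/- Let h = [[−2, 0, 0], [0, −1, 1], [0, 1, 1]] (a real symmetric 3×3 matrix), let C = [[0, h], [h, 0]] ∈ M_6(ℂ) in 3×3 block form, and let I = [[0, 1₃], [1₃, 0]] where 1₃ is the 3×3 identity. Then C is Hermitian, its negative eigenvalues are exactly −2 and −√2, with −√2 of multiplicity two, the sum of the eigenspaces of C for its negative eigenvalues is a 3-dimensional subspace of ℂ⁶, and the intersection of this subspace with the (−1)-eigenspace of I is 1-dimensional. (In the notation of the paper, n₋(1,−1) = 1 for the deformed Hamiltonian H₁.) -/
import Mathlib

open Complex Matrix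

/-- The set of negative (real) eigenvalues of a `6×6` complex matrix. -/
def negEigenvalues (A : Matrix (Fin 3 ⊕ Fin 3) (Fin 3 ⊕ Fin 3) ℂ) : Set ℂ :=
  {μ : ℂ | μ ∈ spectrum ℂ A ∧ ∃ x : ℝ, (x : ℂ) = μ ∧ x < 0}

/-- The sum of the eigenspaces of `A` for its negative eigenvalues, as a subspace of `ℂ⁶`. -/
noncomputable def negSpace (A : Matrix (Fin 3 ⊕ Fin 3) (Fin 3 ⊕ Fin 3) ℂ) :
    Submodule ℂ ((Fin 3 ⊕ Fin 3) → ℂ) :=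
  ⨆ μ ∈ negEigenvalues A, Module.End.eigenspace (Matrix.toLin' A) μ

/-- The inversion symmetry operator `I = [[0, 1₃], [1₃, 0]]`. -/
noncomputable def inversionOp : Matrix (Fin 3 ⊕ Fin 3) (Fin 3 ⊕ Fin 3) ℂ :=
  Matrix.fromBlocks 0 1 1 0

/-- The off-diagonal block `h₁(1,−1)` of the deformed Hamiltonian at the fixed point `(1,−1)`. -/
noncomputable def hOneMinusOne : Matrix (Fin 3) (Fin 3) ℂ := !![-2, 0, 0; 0, -1, 1; 0, 1, 1]

/-- The deformed Hamiltonian `H₁(1,−1)` in block form. -/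
noncomputable def COneMinusOne : Matrix (Fin 3 ⊕ Fin 3) (Fin 3 ⊕ Fin 3) ℂ :=
  Matrix.fromBlocks 0 hOneMinusOne hOneMinusOne 0

/-! ### Auxiliary material -/

local notation "sC" => ((Real.sqrt 2 : ℝ) : ℂ)

lemma s_sq : sC * sC = 2 := by
  have h : Real.sqrt 2 * Real.sqrt 2 = 2 := Real.mul_self_sqrt (by norm_num)
  rw [← Complex.ofReal_mul, h]; norm_num

lemma s_ne : sC ≠ 0 := by simp [Real.sqrt_eq_zero']

noncomputable def w0 : (Fin 3 ⊕ Fin 3) → ℂ := Sum.elim ![1,0,0] ![1,0,0]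
noncomputable def w1 : (Fin 3 ⊕ Fin 3) → ℂ := Sum.elim ![0,sC,0] ![0,1,-1]
noncomputable def w2 : (Fin 3 ⊕ Fin 3) → ℂ := Sum.elim ![0,0,sC] ![0,-1,-1]
noncomputable def w3 : (Fin 3 ⊕ Fin 3) → ℂ := w1 + (1 + sC) • w2

lemma mulVec_C (x : (Fin 3 ⊕ Fin 3) → ℂ) :
    COneMinusOne.mulVec x = Sum.elim
      ![-2 * x (Sum.inr 0), -x (Sum.inr 1) + x (Sum.inr 2), x (Sum.inr 1) + x (Sum.inr 2)]
      ![-2 * x (Sum.inl 0), -x (Sum.inl 1) + x (Sum.inl 2), x (Sum.inl 1) + x (Sum.inl 2)] := by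
  funext i
  rcases i with i | i <;> fin_cases i <;>
    simp [COneMinusOne, hOneMinusOne, Matrix.mulVec, dotProduct,
      Fintype.sum_sum_type, Fin.sum_univ_three]

lemma mulVec_I (x : (Fin 3 ⊕ Fin 3) → ℂ) :
    inversionOp.mulVec x = Sum.elim (fun i => x (Sum.inr i)) (fun i => x (Sum.inl i)) := by
  funext i
  rcases i with i | i <;> fin_cases i <;>
    simp [inversionOp, Matrix.mulVec, dotProduct, Fintype.sum_sum_type,
      Fin.sum_univ_three, Matrix.one_apply]

lemma Cw0 : COneMinusOne.mulVec w0 = (-2 : ℂ) • w0 := by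
  rw [mulVec_C]; funext i
  rcases i with i | i <;> fin_cases i <;> simp [w0]

lemma Cw1 : COneMinusOne.mulVec w1 = (-sC) • w1 := by
  rw [mulVec_C]; funext i
  rcases i with i | i <;> fin_cases i <;> simp [w1] <;>
    first
      | linear_combination s_sq | linear_combination -s_sq
      | linear_combination (2:ℂ) * s_sq | linear_combination (-2:ℂ) * s_sq

lemma Cw2 : COneMinusOne.mulVec w2 = (-sC) • w2 := by
  rw [mulVec_C]; funext i
  rcases i with i | i <;> fin_cases i <;> simp [w2] <;>
    first
      | linear_combination s_sq | linear_combination -s_sq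
      | linear_combination (2:ℂ) * s_sq | linear_combination (-2:ℂ) * s_sq

lemma spec_iff (μ : ℂ) : μ ∈ spectrum ℂ COneMinusOne ↔
    Module.End.HasEigenvalue (Matrix.toLin' COneMinusOne) μ := by
  rw [Module.End.hasEigenvalue_iff_mem_spectrum]
  have h : (Matrix.toLinAlgEquiv' COneMinusOne : ((Fin 3 ⊕ Fin 3) → ℂ) →ₗ[ℂ] _) =
      Matrix.toLin' COneMinusOne := by
    ext v
    simp [Matrix.toLin'_apply]
  rw [← h, AlgEquiv.spectrum_eq]

lemma eig_equations {μ : ℂ} {y : (Fin 3 ⊕ Fin 3) → ℂ}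
    (hy : Matrix.toLin' COneMinusOne y = μ • y) :
    (-2 * y (Sum.inr 0) = μ * y (Sum.inl 0)) ∧
    (-y (Sum.inr 1) + y (Sum.inr 2) = μ * y (Sum.inl 1)) ∧
    (y (Sum.inr 1) + y (Sum.inr 2) = μ * y (Sum.inl 2)) ∧
    (-2 * y (Sum.inl 0) = μ * y (Sum.inr 0)) ∧
    (-y (Sum.inl 1) + y (Sum.inl 2) = μ * y (Sum.inr 1)) ∧
    (y (Sum.inl 1) + y (Sum.inl 2) = μ * y (Sum.inr 2)) := by
  rw [Matrix.toLin'_apply, mulVec_C] at hy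
  refine ⟨?_, ?_, ?_, ?_, ?_, ?_⟩
  · simpa using congr_fun hy (Sum.inl 0)
  · simpa using congr_fun hy (Sum.inl 1)
  · simpa using congr_fun hy (Sum.inl 2)
  · simpa using congr_fun hy (Sum.inr 0)
  · simpa using congr_fun hy (Sum.inr 1)
  · simpa using congr_fun hy (Sum.inr 2)

lemma w0_ne : w0 ≠ 0 := by
  intro h
  have := congr_fun h (Sum.inl 0)
  simp [w0] at this

lemma w1_ne : w1 ≠ 0 := by
  intro h
  have := congr_fun h (Sum.inl 1)
  simp [w1] at this

lemma negEig_eq : negEigenvalues COneMinusOne = {(-2 : ℂ), -sC} := by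
  ext μ
  simp only [negEigenvalues, Set.mem_setOf_eq, Set.mem_insert_iff, Set.mem_singleton_iff]
  constructor
  · rintro ⟨hspec, x, rfl, hx⟩
    obtain ⟨y, hmem, hne⟩ := ((spec_iff _).1 hspec).exists_hasEigenvector
    rw [Module.End.mem_eigenspace_iff] at hmem
    obtain ⟨e1, e2, e3, e4, e5, e6⟩ := eig_equations hmem
    obtain ⟨i, hi⟩ := Function.ne_iff.mp hne
    have key : ((x:ℝ):ℂ) * ((x:ℝ):ℂ) = 4 ∨ ((x:ℝ):ℂ) * ((x:ℝ):ℂ) = 2 := by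
      rcases i with i | i <;> fin_cases i
      · left
        have h : (((x:ℝ):ℂ) * ((x:ℝ):ℂ) - 4) * y (Sum.inl 0) = 0 := by linear_combination -((x:ℝ):ℂ) * e1 + 2 * e4
        rcases mul_eq_zero.mp h with h | h
        · linear_combination h
        · exact absurd h (by simpa using hi)
      · right
        have h : (((x:ℝ):ℂ) * ((x:ℝ):ℂ) - 2) * y (Sum.inl 1) = 0 := by linear_combination -((x:ℝ):ℂ) * e2 + e5 - e6
        rcases mul_eq_zero.mp h with h | h
        · linear_combination h
        · exact absurd h (by simpa using hi)
      · right
        have h : (((x:ℝ):ℂ) * ((x:ℝ):ℂ) - 2) * y (Sum.inl 2) = 0 := by linear_combination -((x:ℝ):ℂ) * e3 - e5 - e6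
        rcases mul_eq_zero.mp h with h | h
        · linear_combination h
        · exact absurd h (by simpa using hi)
      · left
        have h : (((x:ℝ):ℂ) * ((x:ℝ):ℂ) - 4) * y (Sum.inr 0) = 0 := by linear_combination -((x:ℝ):ℂ) * e4 + 2 * e1
        rcases mul_eq_zero.mp h with h | h
        · linear_combination h
        · exact absurd h (by simpa using hi)
      · right
        have h : (((x:ℝ):ℂ) * ((x:ℝ):ℂ) - 2) * y (Sum.inr 1) = 0 := by linear_combination -((x:ℝ):ℂ) * e5 + e2 - e3
        rcases mul_eq_zero.mp h with h | h
        · linear_combination h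
        · exact absurd h (by simpa using hi)
      · right
        have h : (((x:ℝ):ℂ) * ((x:ℝ):ℂ) - 2) * y (Sum.inr 2) = 0 := by linear_combination -((x:ℝ):ℂ) * e6 - e2 - e3
        rcases mul_eq_zero.mp h with h | h
        · linear_combination h
        · exact absurd h (by simpa using hi)
    rcases key with h | h
    · left
      have hxx : x * x = 4 := by exact_mod_cast h
      have : x = -2 := by nlinarith
      rw [this]; norm_num
    · right
      have hxx : x * x = 2 := by exact_mod_cast h
      have h2 : Real.sqrt 2 * Real.sqrt 2 = 2 := Real.mul_self_sqrt (by norm_num)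
      have hfac : (x - Real.sqrt 2) * (x + Real.sqrt 2) = 0 := by linear_combination hxx - h2
      rcases mul_eq_zero.mp hfac with hf | hf
      · exfalso
        have := Real.sqrt_nonneg 2
        linarith [sub_eq_zero.mp hf ▸ hx]
      · have : x = -Real.sqrt 2 := by linarith [eq_neg_of_add_eq_zero_left hf]
        rw [this]; push_cast; ring
  · rintro (rfl | rfl)
    · refine ⟨?_, -2, by norm_num, by norm_num⟩
      rw [spec_iff]
      exact Module.End.hasEigenvalue_of_hasEigenvector
        ⟨Module.End.mem_eigenspace_iff.2 (by rw [Matrix.toLin'_apply]; exact Cw0), w0_ne⟩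
    · refine ⟨?_, -Real.sqrt 2, by push_cast; ring, by simpa using Real.sqrt_pos.mpr (by norm_num : (0:ℝ) < 2)⟩
      rw [spec_iff]
      exact Module.End.hasEigenvalue_of_hasEigenvector
        ⟨Module.End.mem_eigenspace_iff.2 (by rw [Matrix.toLin'_apply]; exact Cw1), w1_ne⟩

lemma eig_s_eq : Module.End.eigenspace (Matrix.toLin' COneMinusOne) (-sC) =
    Submodule.span ℂ {w1, w2} := by
  apply le_antisymm
  · intro y hy
    rw [Module.End.mem_eigenspace_iff] at hy
    obtain ⟨e1, e2, e3, e4, e5, e6⟩ := eig_equations hy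
    have hs := s_sq
    have h0 : y (Sum.inl 0) = 0 := by
      have h : (4 - sC * sC) * y (Sum.inl 0) = 0 := by linear_combination (-2 : ℂ) * e4 - sC * e1
      rw [hs] at h
      norm_num at h
      exact h
    have h0' : y (Sum.inr 0) = 0 := by
      have h := e1
      rw [h0] at h
      norm_num at h
      exact h
    have k1 : sC * y (Sum.inr 1) = y (Sum.inl 1) - y (Sum.inl 2) := by linear_combination e5
    have k2 : sC * y (Sum.inr 2) = -(y (Sum.inl 1) + y (Sum.inl 2)) := by linear_combination e6
    rw [Submodule.mem_span_pair]
    refine ⟨y (Sum.inl 1) / sC, y (Sum.inl 2) / sC, ?_⟩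
    funext i
    rcases i with i | i <;> fin_cases i <;>
      simp [w1, w2, h0, h0', div_mul_cancel₀, s_ne]
    · field_simp
      first
        | linear_combination k1 | linear_combination -k1
        | linear_combination (2:ℂ) * k1 | linear_combination (-2:ℂ) * k1
        | linear_combination sC * k1 | linear_combination -sC * k1
    · field_simp
      first
        | linear_combination k2 | linear_combination -k2
        | linear_combination (2:ℂ) * k2 | linear_combination (-2:ℂ) * k2
        | linear_combination sC * k2 | linear_combination -sC * k2
  · rw [Submodule.span_le]
    rintro x (rfl | rfl) <;>
      rw [SetLike.mem_coe, Module.End.mem_eigenspace_iff, Matrix.toLin'_apply]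
    · exact Cw1
    · exact Cw2

lemma eig_2_eq : Module.End.eigenspace (Matrix.toLin' COneMinusOne) (-2) =
    Submodule.span ℂ {w0} := by
  apply le_antisymm
  · intro y hy
    rw [Module.End.mem_eigenspace_iff] at hy
    obtain ⟨e1, e2, e3, e4, e5, e6⟩ := eig_equations hy
    have h1 : y (Sum.inl 1) = 0 := by
      linear_combination e2 + (1/2 : ℂ) * e5 - (1/2 : ℂ) * e6
    have h2 : y (Sum.inl 2) = 0 := by
      linear_combination e3 - (1/2 : ℂ) * e5 - (1/2 : ℂ) * e6
    have h3 : y (Sum.inr 1) = 0 := by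
      linear_combination (1/2 : ℂ) * e5 + (1/2 : ℂ) * h1 - (1/2 : ℂ) * h2
    have h4 : y (Sum.inr 2) = 0 := by
      linear_combination (1/2 : ℂ) * e6 - (1/2 : ℂ) * h1 - (1/2 : ℂ) * h2
    have h5 : y (Sum.inr 0) = y (Sum.inl 0) := by linear_combination (-1/2 : ℂ) * e1
    rw [Submodule.mem_span_singleton]
    refine ⟨y (Sum.inl 0), ?_⟩
    funext i
    rcases i with i | i <;> fin_cases i <;> simp [w0, h1, h2, h3, h4, h5]
  · rw [Submodule.span_le]
    rintro x rfl
    rw [SetLike.mem_coe, Module.End.mem_eigenspace_iff, Matrix.toLin'_apply]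
    exact Cw0

lemma negSpace_eq : negSpace COneMinusOne = Submodule.span ℂ {w0, w1, w2} := by
  rw [negSpace, negEig_eq, iSup_pair, eig_2_eq, eig_s_eq, ← Submodule.span_union,
    Set.singleton_union]

lemma li3 : LinearIndependent ℂ ![w0, w1, w2] := by
  rw [Fintype.linearIndependent_iff]
  intro g hg
  rw [Fin.sum_univ_three] at hg
  simp only [Matrix.cons_val_zero, Matrix.cons_val_one, Matrix.head_cons] at hg
  have h0 := congr_fun hg (Sum.inl 0)
  have h1 := congr_fun hg (Sum.inl 1)
  have h2 := congr_fun hg (Sum.inl 2)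
  simp [w0, w1, w2] at h0 h1 h2
  intro i
  fin_cases i
  · simpa using h0
  · simpa using h1
  · simpa using h2

lemma li2 : LinearIndependent ℂ ![w1, w2] := by
  have := li3
  rw [Fintype.linearIndependent_iff] at this ⊢
  intro g hg i
  have := this ![0, g 0, g 1] ?_
  · fin_cases i
    · simpa using this 1
    · simpa using this 2
  · rw [Fin.sum_univ_three]
    rw [Fin.sum_univ_two] at hg
    simpa using hg

lemma range_two : ({w1, w2} : Set ((Fin 3 ⊕ Fin 3) → ℂ)) = Set.range ![w1, w2] := by
  ext x
  simp [Fin.exists_fin_two, or_comm]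

lemma range_three : ({w0, w1, w2} : Set ((Fin 3 ⊕ Fin 3) → ℂ)) = Set.range ![w0, w1, w2] := by
  ext x
  constructor
  · rintro (rfl | rfl | rfl)
    exacts [⟨0, rfl⟩, ⟨1, rfl⟩, ⟨2, rfl⟩]
  · rintro ⟨i, rfl⟩
    fin_cases i
    · exact Or.inl rfl
    · exact Or.inr (Or.inl rfl)
    · exact Or.inr (Or.inr rfl)

lemma Iw3 : inversionOp.mulVec w3 = (-1 : ℂ) • w3 := by
  rw [mulVec_I]
  funext i
  rcases i with i | i <;> fin_cases i <;> simp [w3, w1, w2] <;>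
    first | ring1 | linear_combination s_sq | linear_combination -s_sq

lemma w3_ne : w3 ≠ 0 := by
  intro h
  have := congr_fun h (Sum.inl 1)
  simp [w3, w1, w2] at this

lemma inter_eq : negSpace COneMinusOne ⊓
    Module.End.eigenspace (Matrix.toLin' inversionOp) (-1) = Submodule.span ℂ {w3} := by
  apply le_antisymm
  · intro x hx
    rw [Submodule.mem_inf] at hx
    obtain ⟨hx1, hx2⟩ := hx
    rw [negSpace_eq, Submodule.mem_span_insert] at hx1
    obtain ⟨a, z, hz, rfl⟩ := hx1
    rw [Submodule.mem_span_pair] at hz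
    obtain ⟨b, c, rfl⟩ := hz
    rw [Module.End.mem_eigenspace_iff, Matrix.toLin'_apply, mulVec_I] at hx2
    have q0 := congr_fun hx2 (Sum.inl 0)
    have q1 := congr_fun hx2 (Sum.inl 1)
    simp [w0, w1, w2] at q0 q1
    have ha : a = 0 := by linear_combination (1/2 : ℂ) * q0
    have hc : c = b + b * sC := by linear_combination -q1
    rw [Submodule.mem_span_singleton]
    refine ⟨b, ?_⟩
    funext i
    rcases i with i | i <;> fin_cases i <;>
      simp [w3, w1, w2, w0, ha, hc] <;> ring
  · rw [Submodule.span_le]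
    rintro x rfl
    refine ⟨?_, ?_⟩
    · rw [SetLike.mem_coe, negSpace_eq]
      exact Submodule.add_mem _
        (Submodule.subset_span (by simp))
        (Submodule.smul_mem _ _ (Submodule.subset_span (by simp)))
    · rw [SetLike.mem_coe, Module.End.mem_eigenspace_iff, Matrix.toLin'_apply]
      exact Iw3

lemma herm : COneMinusOne.IsHermitian := by
  have hh : hOneMinusOne.IsHermitian := by
    rw [Matrix.IsHermitian]
    ext i j
    fin_cases i <;> fin_cases j <;>
      simp [hOneMinusOne, Matrix.conjTranspose_apply, Matrix.vecHead, Matrix.vecTail]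
  rw [Matrix.IsHermitian, COneMinusOne, Matrix.fromBlocks_conjTranspose]
  simp [hh.eq]

/-- `n₋(1,−1) = 1`: `C = H₁(1,−1)` is Hermitian, its negative eigenvalues are exactly `−2` and
`−√2`, with `−√2` of multiplicity two, the sum of the corresponding eigenspaces is
3-dimensional, and its intersection with the `(−1)`-eigenspace of the inversion operator is
1-dimensional. -/
theorem nMinus_at_one_minus_one :
    COneMinusOne.IsHermitian ∧
    negEigenvalues COneMinusOne = {(-2 : ℂ), -(Real.sqrt 2 : ℂ)} ∧
    Module.finrank ℂ
      ↥(Module.End.eigenspace (Matrix.toLin' COneMinusOne) (-(Real.sqrt 2 : ℂ))) = 2 ∧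
    Module.finrank ℂ ↥(negSpace COneMinusOne) = 3 ∧
    Module.finrank ℂ
      ↥(negSpace COneMinusOne ⊓ Module.End.eigenspace (Matrix.toLin' inversionOp) (-1)) = 1 := by
  refine ⟨herm, negEig_eq, ?_, ?_, ?_⟩
  · rw [eig_s_eq, range_two, finrank_span_eq_card li2]
    rfl
  · rw [negSpace_eq, range_three, finrank_span_eq_card li3]
    rfl
  · rw [inter_eq]
    exact finrank_span_singleton w3_ne
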